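/- Suppose T satisfies the norm-limit property and (C_j) is an asymptotic expansion for T. Then the coefficients satisfy the associativity identities: for every k ∈ ℕ and all f, g, h ∈ A, ∑_{l=0}^{k} C_l(f, C_{k−l}(g,h)) = ∑_{l=0}^{k} C_l(C_{k−l}(f,g), h). Consequently the induced ℂ[[ν]]-bilinear product f ⋆ g = ∑_{j≥0} C_j(f,g) ν^j on A[[ν]] is associative. -/

import Mathlib

open Filter Finset MeasureTheory

variable {X : Type*} [TopologicalSpace X] [CompactSpace X]
variable {H : ℕ → Type*} [∀ m, NormedAddCommGroup (H m)]
  [∀ m, InnerProductSpace ℂ (H m)] [∀ m, CompleteSpace (H m)]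

/-- `T` satisfies the norm-limit property if `‖T^(m)(f)‖ → ‖f‖_∞` for every `f ∈ C(X, ℂ)`. -/
def NormLimitProperty (T : ∀ m : ℕ, C(X, ℂ) →ₗ[ℂ] (H m →L[ℂ] H m)) : Prop :=
  ∀ f : C(X, ℂ), Tendsto (fun m : ℕ => ‖T m f‖) atTop (nhds ‖f‖)

/-- A family of ℂ-bilinear maps `C_j` is an asymptotic expansion for `T` if for all
`f, g` and every `N` there is `K ≥ 0` with
`‖T^(m)(f)·T^(m)(g) − ∑_{j<N} m^{−j} T^(m)(C_j(f,g))‖ ≤ K·m^{−N}` for all `m ≥ 1`. -/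
def IsAsymptoticExpansion (T : ∀ m : ℕ, C(X, ℂ) →ₗ[ℂ] (H m →L[ℂ] H m))
    (C : ℕ → C(X, ℂ) →ₗ[ℂ] C(X, ℂ) →ₗ[ℂ] C(X, ℂ)) : Prop :=
  ∀ (f g : C(X, ℂ)) (N : ℕ), ∃ K : ℝ, 0 ≤ K ∧ ∀ m : ℕ, 1 ≤ m →
    ‖T m f * T m g - ∑ j ∈ Finset.range N, ((m : ℂ)⁻¹) ^ j • T m (C j f g)‖
      ≤ K * ((m : ℝ)⁻¹) ^ N

set_option linter.unusedSectionVars false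
set_option linter.unusedVariables false

section aux
variable {M : Type*} [AddCommMonoid M]

lemma adSum (N n : ℕ) (hn : n < N) (f : ℕ → ℕ → M) :
    ∑ p ∈ Finset.HasAntidiagonal.antidiagonal n, f p.1 p.2
      = ∑ i ∈ range N, ∑ j ∈ range N, if i + j = n then f i j else 0 := by
  rw [← Finset.sum_product', ← Finset.sum_filter]
  apply Finset.sum_congr _ (fun _ _ => rfl)
  ext ⟨i, j⟩
  simp only [Finset.HasAntidiagonal.mem_antidiagonal, Finset.mem_filter, Finset.mem_product, Finset.mem_range]
  omega

lemma sum_triangle (N : ℕ) (F : ℕ → ℕ → M) :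
    ∑ j ∈ range N, ∑ i ∈ range (N - j), F i j
      = ∑ k ∈ range N, ∑ l ∈ range (k + 1), F l (k - l) := by
  have lhs : ∑ j ∈ range N, ∑ i ∈ range (N - j), F i j
      = ∑ j ∈ range N, ∑ i ∈ range N, if i + j < N then F i j else 0 := by
    refine Finset.sum_congr rfl fun j hj => ?_
    rw [← Finset.sum_filter]
    apply Finset.sum_congr _ (fun _ _ => rfl)
    ext i
    simp only [Finset.mem_range, Finset.mem_filter]
    omega
  have rhs : ∑ k ∈ range N, ∑ l ∈ range (k + 1), F l (k - l)
      = ∑ i ∈ range N, ∑ j ∈ range N, if i + j < N then F i j else 0 := by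
    have e1 : ∀ k ∈ range N, ∑ l ∈ range (k + 1), F l (k - l)
        = ∑ i ∈ range N, ∑ j ∈ range N, if i + j = k then F i j else 0 := fun k hk =>
      (Finset.Nat.sum_antidiagonal_eq_sum_range_succ_mk (fun p => F p.1 p.2) k).symm.trans
        (adSum N k (mem_range.mp hk) F)
    rw [Finset.sum_congr rfl e1, Finset.sum_comm]
    refine Finset.sum_congr rfl fun i _ => ?_
    rw [Finset.sum_comm]
    refine Finset.sum_congr rfl fun j _ => ?_
    rw [Finset.sum_ite_eq (range N) (i + j) (fun _ => F i j)]
    simp [Finset.mem_range]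
  rw [lhs, rhs, Finset.sum_comm]

lemma sum_ite_eq_of (N v : ℕ) (P : Prop) [Decidable P] (h : P → v < N) (E : M) :
    ∑ j ∈ range N, (if j = v ∧ P then E else 0) = if P then E else 0 := by
  by_cases hP : P
  · simp only [hP, and_true, if_true]
    rw [Finset.sum_ite_eq' (range N) v (fun _ => E), if_pos (mem_range.mpr (h hP))]
  · simp [hP]

lemma rot3 (s : Finset ℕ) (ψ : ℕ → ℕ → ℕ → M) :
    ∑ x ∈ s, ∑ y ∈ s, ∑ z ∈ s, ψ x y z = ∑ y ∈ s, ∑ z ∈ s, ∑ x ∈ s, ψ x y z := by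
  rw [Finset.sum_comm]
  exact Finset.sum_congr rfl fun y _ => Finset.sum_comm

lemma rot4 (s : Finset ℕ) (ψ : ℕ → ℕ → ℕ → ℕ → M) :
    ∑ x ∈ s, ∑ y ∈ s, ∑ z ∈ s, ∑ w ∈ s, ψ x y z w
      = ∑ y ∈ s, ∑ z ∈ s, ∑ w ∈ s, ∑ x ∈ s, ψ x y z w := by
  rw [Finset.sum_comm]
  exact Finset.sum_congr rfl fun y _ => rot3 s (fun x z w => ψ x y z w)

lemma rot5 (s : Finset ℕ) (ψ : ℕ → ℕ → ℕ → ℕ → ℕ → M) :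
    ∑ x ∈ s, ∑ y ∈ s, ∑ z ∈ s, ∑ w ∈ s, ∑ v ∈ s, ψ x y z w v
      = ∑ y ∈ s, ∑ z ∈ s, ∑ w ∈ s, ∑ v ∈ s, ∑ x ∈ s, ψ x y z w v := by
  rw [Finset.sum_comm]
  exact Finset.sum_congr rfl fun y _ => rot4 s (fun x z w v => ψ x y z w v)

lemma reorder5_L (s : Finset ℕ) (φ : ℕ → ℕ → ℕ → ℕ → ℕ → M) :
    ∑ c ∈ s, ∑ i ∈ s, ∑ d ∈ s, ∑ a ∈ s, ∑ b ∈ s, φ c i d a b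
      = ∑ i ∈ s, ∑ a ∈ s, ∑ b ∈ s, ∑ c ∈ s, ∑ d ∈ s, φ c i d a b :=
  (rot5 s φ).trans (Finset.sum_congr rfl fun i _ => rot4 s fun d a b c => φ c i d a b)

lemma reorder5_R (s : Finset ℕ) (φ : ℕ → ℕ → ℕ → ℕ → ℕ → M) :
    ∑ c ∈ s, ∑ b ∈ s, ∑ d ∈ s, ∑ i ∈ s, ∑ a ∈ s, φ c b d i a
      = ∑ i ∈ s, ∑ a ∈ s, ∑ b ∈ s, ∑ c ∈ s, ∑ d ∈ s, φ c b d i a :=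
  (rot5 s φ).trans <| ((rot5 s fun b d i a c => φ c b d i a).trans
    ((rot5 s fun d i a c b => φ c b d i a).trans
      (Finset.sum_congr rfl fun i _ => Finset.sum_congr rfl fun a _ => Finset.sum_comm)))

lemma extend3 (j k : ℕ) (hjk : j ≤ k) (E : ℕ → ℕ → ℕ → M) :
    (∑ d ∈ range (j+1), ∑ a ∈ range (j+1), ∑ b ∈ range (j+1),
        if d + a + b = j then E d a b else 0)
      = ∑ d ∈ range (k+1), ∑ a ∈ range (k+1), ∑ b ∈ range (k+1),
        if d + a + b = j then E d a b else 0 := by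
  have hsub : range (j+1) ⊆ range (k+1) := by
    intro x hx; rw [mem_range] at hx ⊢; omega
  have h1 : ∀ d a : ℕ, (∑ b ∈ range (j+1), if d + a + b = j then E d a b else 0)
      = ∑ b ∈ range (k+1), if d + a + b = j then E d a b else 0 := fun d a =>
    Finset.sum_subset hsub (fun b _ hb => if_neg (by
      simp only [mem_range, not_lt] at hb; omega))
  have h2 : ∀ d : ℕ, (∑ a ∈ range (j+1), ∑ b ∈ range (k+1),
        if d + a + b = j then E d a b else 0)
      = ∑ a ∈ range (k+1), ∑ b ∈ range (k+1), if d + a + b = j then E d a b else 0 := fun d =>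
    Finset.sum_subset hsub (fun a _ ha => Finset.sum_eq_zero fun b _ => if_neg (by
      simp only [mem_range, not_lt] at ha; omega))
  have h3 : (∑ d ∈ range (j+1), ∑ a ∈ range (k+1), ∑ b ∈ range (k+1),
        if d + a + b = j then E d a b else 0)
      = ∑ d ∈ range (k+1), ∑ a ∈ range (k+1), ∑ b ∈ range (k+1),
        if d + a + b = j then E d a b else 0 :=
    Finset.sum_subset hsub (fun d _ hd => Finset.sum_eq_zero fun a _ =>
      Finset.sum_eq_zero fun b _ => if_neg (by
        simp only [mem_range, not_lt] at hd; omega))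
  calc (∑ d ∈ range (j+1), ∑ a ∈ range (j+1), ∑ b ∈ range (j+1),
        if d + a + b = j then E d a b else 0)
      = ∑ d ∈ range (j+1), ∑ a ∈ range (j+1), ∑ b ∈ range (k+1),
        if d + a + b = j then E d a b else 0 :=
        Finset.sum_congr rfl fun d _ => Finset.sum_congr rfl fun a _ => h1 d a
    _ = ∑ d ∈ range (j+1), ∑ a ∈ range (k+1), ∑ b ∈ range (k+1),
        if d + a + b = j then E d a b else 0 :=
        Finset.sum_congr rfl fun d _ => h2 d
    _ = _ := h3


end aux


lemma expandR (T : ∀ m : ℕ, C(X, ℂ) →ₗ[ℂ] (H m →L[ℂ] H m))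
    (C : ℕ → C(X, ℂ) →ₗ[ℂ] C(X, ℂ) →ₗ[ℂ] C(X, ℂ))
    (hC : IsAsymptoticExpansion T C)
    (hbd : ∀ f : C(X, ℂ), ∃ M : ℝ, 0 ≤ M ∧ ∀ m, ‖T m f‖ ≤ M)
    (f g h : C(X, ℂ)) (N : ℕ) :
    ∃ K : ℝ, 0 ≤ K ∧ ∀ m : ℕ, 1 ≤ m →
      ‖T m f * (T m g * T m h) - ∑ k ∈ range N, ((m : ℂ)⁻¹) ^ k •
          T m (∑ l ∈ range (k + 1), C l f (C (k - l) g h))‖ ≤ K * ((m : ℝ)⁻¹) ^ N := by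
  obtain ⟨Mf, hMf0, hMf⟩ := hbd f
  obtain ⟨K₁, hK₁0, hK₁⟩ := hC g h N
  choose K₂ hK₂0 hK₂ using fun j => hC f (C j g h) (N - j)
  refine ⟨Mf * K₁ + ∑ j ∈ range N, K₂ j,
    add_nonneg (mul_nonneg hMf0 hK₁0) (Finset.sum_nonneg fun j _ => hK₂0 j), fun m hm => ?_⟩
  set w : ℂ := ((m : ℂ))⁻¹ with hw
  have hwn : ‖w‖ = (m : ℝ)⁻¹ := by simp [hw]
  -- reindexing identity
  have hre : ∑ j ∈ range N, ∑ i ∈ range (N - j), w ^ j • (w ^ i • T m (C i f (C j g h)))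
      = ∑ k ∈ range N, w ^ k • T m (∑ l ∈ range (k + 1), C l f (C (k - l) g h)) := by
    rw [sum_triangle N (fun i j => w ^ j • (w ^ i • T m (C i f (C j g h))))]
    refine Finset.sum_congr rfl fun k hk => ?_
    rw [map_sum, Finset.smul_sum]
    refine Finset.sum_congr rfl fun l hl => ?_
    rw [smul_smul, ← pow_add]
    congr 2
    have := mem_range.mp hl
    omega
  -- algebraic identity
  have hid : T m f * (T m g * T m h)
        - ∑ k ∈ range N, w ^ k • T m (∑ l ∈ range (k + 1), C l f (C (k - l) g h))
      = T m f * (T m g * T m h - ∑ j ∈ range N, w ^ j • T m (C j g h))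
        + ∑ j ∈ range N, w ^ j • (T m f * T m (C j g h)
            - ∑ i ∈ range (N - j), w ^ i • T m (C i f (C j g h))) := by
    rw [mul_sub, Finset.mul_sum]
    have e1 : ∀ j ∈ range N, w ^ j • (T m f * T m (C j g h)
          - ∑ i ∈ range (N - j), w ^ i • T m (C i f (C j g h)))
        = T m f * (w ^ j • T m (C j g h))
          - ∑ i ∈ range (N - j), w ^ j • (w ^ i • T m (C i f (C j g h))) := by
      intro j hj
      rw [smul_sub, Finset.smul_sum, mul_smul_comm]
    rw [Finset.sum_congr rfl e1, Finset.sum_sub_distrib, hre]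
    abel
  rw [hid]
  have hinv0 : (0:ℝ) ≤ (m:ℝ)⁻¹ := by positivity
  calc ‖T m f * (T m g * T m h - ∑ j ∈ range N, w ^ j • T m (C j g h))
        + ∑ j ∈ range N, w ^ j • (T m f * T m (C j g h)
            - ∑ i ∈ range (N - j), w ^ i • T m (C i f (C j g h)))‖
      ≤ ‖T m f * (T m g * T m h - ∑ j ∈ range N, w ^ j • T m (C j g h))‖
        + ‖∑ j ∈ range N, w ^ j • (T m f * T m (C j g h)
            - ∑ i ∈ range (N - j), w ^ i • T m (C i f (C j g h)))‖ := norm_add_le _ _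
    _ ≤ Mf * (K₁ * ((m:ℝ)⁻¹) ^ N)
        + ∑ j ∈ range N, K₂ j * ((m:ℝ)⁻¹) ^ N := by
        gcongr ?_ + ?_
        · calc ‖T m f * (T m g * T m h - ∑ j ∈ range N, w ^ j • T m (C j g h))‖
              ≤ ‖T m f‖ * ‖T m g * T m h - ∑ j ∈ range N, w ^ j • T m (C j g h)‖ :=
              norm_mul_le _ _
            _ ≤ Mf * (K₁ * ((m:ℝ)⁻¹) ^ N) := by
              apply mul_le_mul (hMf m) (hK₁ m hm) (norm_nonneg _) hMf0
        · calc ‖∑ j ∈ range N, w ^ j • (T m f * T m (C j g h)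
                - ∑ i ∈ range (N - j), w ^ i • T m (C i f (C j g h)))‖
              ≤ ∑ j ∈ range N, ‖w ^ j • (T m f * T m (C j g h)
                - ∑ i ∈ range (N - j), w ^ i • T m (C i f (C j g h)))‖ := norm_sum_le _ _
            _ ≤ ∑ j ∈ range N, K₂ j * ((m:ℝ)⁻¹) ^ N := by
              refine Finset.sum_le_sum fun j hj => ?_
              rw [norm_smul, norm_pow, hwn]
              have hj' : j + (N - j) = N := by
                have := mem_range.mp hj; omega
              calc ((m:ℝ)⁻¹) ^ j * ‖T m f * T m (C j g h)
                    - ∑ i ∈ range (N - j), w ^ i • T m (C i f (C j g h))‖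
                  ≤ ((m:ℝ)⁻¹) ^ j * (K₂ j * ((m:ℝ)⁻¹) ^ (N - j)) := by
                    gcongr
                    exact hK₂ j m hm
                _ = K₂ j * ((m:ℝ)⁻¹) ^ N := by
                    rw [show ((m:ℝ)⁻¹) ^ j * (K₂ j * ((m:ℝ)⁻¹) ^ (N - j))
                        = K₂ j * (((m:ℝ)⁻¹) ^ j * ((m:ℝ)⁻¹) ^ (N - j)) from by ring,
                      ← pow_add, hj']
    _ = (Mf * K₁ + ∑ j ∈ range N, K₂ j) * ((m:ℝ)⁻¹) ^ N := by
        rw [← Finset.sum_mul]; ring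

lemma expandL (T : ∀ m : ℕ, C(X, ℂ) →ₗ[ℂ] (H m →L[ℂ] H m))
    (C : ℕ → C(X, ℂ) →ₗ[ℂ] C(X, ℂ) →ₗ[ℂ] C(X, ℂ))
    (hC : IsAsymptoticExpansion T C)
    (hbd : ∀ f : C(X, ℂ), ∃ M : ℝ, 0 ≤ M ∧ ∀ m, ‖T m f‖ ≤ M)
    (f g h : C(X, ℂ)) (N : ℕ) :
    ∃ K : ℝ, 0 ≤ K ∧ ∀ m : ℕ, 1 ≤ m →
      ‖T m f * T m g * T m h - ∑ k ∈ range N, ((m : ℂ)⁻¹) ^ k •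
          T m (∑ l ∈ range (k + 1), C l (C (k - l) f g) h)‖ ≤ K * ((m : ℝ)⁻¹) ^ N := by
  obtain ⟨Mh, hMh0, hMh⟩ := hbd h
  obtain ⟨K₁, hK₁0, hK₁⟩ := hC f g N
  choose K₂ hK₂0 hK₂ using fun j => hC (C j f g) h (N - j)
  refine ⟨K₁ * Mh + ∑ j ∈ range N, K₂ j,
    add_nonneg (mul_nonneg hK₁0 hMh0) (Finset.sum_nonneg fun j _ => hK₂0 j), fun m hm => ?_⟩
  set w : ℂ := ((m : ℂ))⁻¹ with hw
  have hwn : ‖w‖ = (m : ℝ)⁻¹ := by simp [hw]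
  have hre : ∑ j ∈ range N, ∑ i ∈ range (N - j), w ^ j • (w ^ i • T m (C i (C j f g) h))
      = ∑ k ∈ range N, w ^ k • T m (∑ l ∈ range (k + 1), C l (C (k - l) f g) h) := by
    rw [sum_triangle N (fun i j => w ^ j • (w ^ i • T m (C i (C j f g) h)))]
    refine Finset.sum_congr rfl fun k hk => ?_
    rw [map_sum, Finset.smul_sum]
    refine Finset.sum_congr rfl fun l hl => ?_
    rw [smul_smul, ← pow_add]
    congr 2
    have := mem_range.mp hl
    omega
  have hid : T m f * T m g * T m h
        - ∑ k ∈ range N, w ^ k • T m (∑ l ∈ range (k + 1), C l (C (k - l) f g) h)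
      = (T m f * T m g - ∑ j ∈ range N, w ^ j • T m (C j f g)) * T m h
        + ∑ j ∈ range N, w ^ j • (T m (C j f g) * T m h
            - ∑ i ∈ range (N - j), w ^ i • T m (C i (C j f g) h)) := by
    rw [sub_mul, Finset.sum_mul]
    have e1 : ∀ j ∈ range N, w ^ j • (T m (C j f g) * T m h
          - ∑ i ∈ range (N - j), w ^ i • T m (C i (C j f g) h))
        = (w ^ j • T m (C j f g)) * T m h
          - ∑ i ∈ range (N - j), w ^ j • (w ^ i • T m (C i (C j f g) h)) := by
      intro j hj
      rw [smul_sub, Finset.smul_sum, smul_mul_assoc]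
    rw [Finset.sum_congr rfl e1, Finset.sum_sub_distrib, hre]
    abel
  rw [hid]
  have hinv0 : (0:ℝ) ≤ (m:ℝ)⁻¹ := by positivity
  calc ‖(T m f * T m g - ∑ j ∈ range N, w ^ j • T m (C j f g)) * T m h
        + ∑ j ∈ range N, w ^ j • (T m (C j f g) * T m h
            - ∑ i ∈ range (N - j), w ^ i • T m (C i (C j f g) h))‖
      ≤ ‖(T m f * T m g - ∑ j ∈ range N, w ^ j • T m (C j f g)) * T m h‖
        + ‖∑ j ∈ range N, w ^ j • (T m (C j f g) * T m h
            - ∑ i ∈ range (N - j), w ^ i • T m (C i (C j f g) h))‖ := norm_add_le _ _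
    _ ≤ K₁ * ((m:ℝ)⁻¹) ^ N * Mh
        + ∑ j ∈ range N, K₂ j * ((m:ℝ)⁻¹) ^ N := by
        gcongr ?_ + ?_
        · calc ‖(T m f * T m g - ∑ j ∈ range N, w ^ j • T m (C j f g)) * T m h‖
              ≤ ‖T m f * T m g - ∑ j ∈ range N, w ^ j • T m (C j f g)‖ * ‖T m h‖ :=
              norm_mul_le _ _
            _ ≤ K₁ * ((m:ℝ)⁻¹) ^ N * Mh := by
              apply mul_le_mul (hK₁ m hm) (hMh m) (norm_nonneg _) (by positivity)
        · calc ‖∑ j ∈ range N, w ^ j • (T m (C j f g) * T m h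
                - ∑ i ∈ range (N - j), w ^ i • T m (C i (C j f g) h))‖
              ≤ ∑ j ∈ range N, ‖w ^ j • (T m (C j f g) * T m h
                - ∑ i ∈ range (N - j), w ^ i • T m (C i (C j f g) h))‖ := norm_sum_le _ _
            _ ≤ ∑ j ∈ range N, K₂ j * ((m:ℝ)⁻¹) ^ N := by
              refine Finset.sum_le_sum fun j hj => ?_
              rw [norm_smul, norm_pow, hwn]
              have hj' : j + (N - j) = N := by
                have := mem_range.mp hj; omega
              calc ((m:ℝ)⁻¹) ^ j * ‖T m (C j f g) * T m h
                    - ∑ i ∈ range (N - j), w ^ i • T m (C i (C j f g) h)‖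
                  ≤ ((m:ℝ)⁻¹) ^ j * (K₂ j * ((m:ℝ)⁻¹) ^ (N - j)) := by
                    gcongr
                    exact hK₂ j m hm
                _ = K₂ j * ((m:ℝ)⁻¹) ^ N := by
                    rw [show ((m:ℝ)⁻¹) ^ j * (K₂ j * ((m:ℝ)⁻¹) ^ (N - j))
                        = K₂ j * (((m:ℝ)⁻¹) ^ j * ((m:ℝ)⁻¹) ^ (N - j)) from by ring,
                      ← pow_add, hj']
    _ = (K₁ * Mh + ∑ j ∈ range N, K₂ j) * ((m:ℝ)⁻¹) ^ N := by
        rw [← Finset.sum_mul]; ring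

lemma key_assoc (T : ∀ m : ℕ, C(X, ℂ) →ₗ[ℂ] (H m →L[ℂ] H m))
    (hT : NormLimitProperty T)
    (C : ℕ → C(X, ℂ) →ₗ[ℂ] C(X, ℂ) →ₗ[ℂ] C(X, ℂ))
    (hC : IsAsymptoticExpansion T C) :
    ∀ (k : ℕ) (f g h : C(X, ℂ)),
      ∑ l ∈ Finset.range (k + 1), C l f (C (k - l) g h)
        = ∑ l ∈ Finset.range (k + 1), C l (C (k - l) f g) h := by
  have hbd : ∀ f : C(X, ℂ), ∃ M : ℝ, 0 ≤ M ∧ ∀ m, ‖T m f‖ ≤ M := by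
    intro f
    obtain ⟨M, hM⟩ := (hT f).bddAbove_range
    exact ⟨max M 0, le_max_right _ _,
      fun m => le_max_of_le_left (hM (Set.mem_range_self m))⟩
  intro k f g h
  set E : ℕ → C(X, ℂ) := fun k =>
    (∑ l ∈ Finset.range (k + 1), C l f (C (k - l) g h))
      - (∑ l ∈ Finset.range (k + 1), C l (C (k - l) f g) h) with hE
  suffices hEk : ∀ k, E k = 0 by
    have := hEk k
    rw [hE] at this
    exact sub_eq_zero.mp this
  have hDD : ∀ N : ℕ, ∃ K : ℝ, 0 ≤ K ∧ ∀ m : ℕ, 1 ≤ m →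
      ‖∑ k ∈ range N, ((m : ℂ)⁻¹) ^ k • T m (E k)‖ ≤ K * ((m : ℝ)⁻¹) ^ N := by
    intro N
    obtain ⟨Kr, hr0, hr⟩ := expandR T C hC hbd f g h N
    obtain ⟨Kl, hl0, hl⟩ := expandL T C hC hbd f g h N
    refine ⟨Kr + Kl, add_nonneg hr0 hl0, fun m hm => ?_⟩
    set w : ℂ := ((m : ℂ))⁻¹
    have hsplit : ∑ k ∈ range N, w ^ k • T m (E k)
        = (∑ k ∈ range N, w ^ k •
              T m (∑ l ∈ Finset.range (k + 1), C l f (C (k - l) g h)))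
          - (∑ k ∈ range N, w ^ k •
              T m (∑ l ∈ Finset.range (k + 1), C l (C (k - l) f g) h)) := by
      rw [← Finset.sum_sub_distrib]
      refine Finset.sum_congr rfl fun k _ => ?_
      rw [hE, map_sub, smul_sub]
    rw [hsplit]
    calc ‖(∑ k ∈ range N, w ^ k •
              T m (∑ l ∈ Finset.range (k + 1), C l f (C (k - l) g h)))
          - (∑ k ∈ range N, w ^ k •
              T m (∑ l ∈ Finset.range (k + 1), C l (C (k - l) f g) h))‖
        = ‖((∑ k ∈ range N, w ^ k •
              T m (∑ l ∈ Finset.range (k + 1), C l f (C (k - l) g h)))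
            - T m f * (T m g * T m h))
          + (T m f * T m g * T m h
            - (∑ k ∈ range N, w ^ k •
              T m (∑ l ∈ Finset.range (k + 1), C l (C (k - l) f g) h)))‖ := by
          rw [mul_assoc]; congr 1; abel
      _ ≤ ‖(∑ k ∈ range N, w ^ k •
              T m (∑ l ∈ Finset.range (k + 1), C l f (C (k - l) g h)))
            - T m f * (T m g * T m h)‖
          + ‖T m f * T m g * T m h
            - (∑ k ∈ range N, w ^ k •
              T m (∑ l ∈ Finset.range (k + 1), C l (C (k - l) f g) h))‖ := norm_add_le _ _
      _ ≤ Kr * ((m:ℝ)⁻¹) ^ N + Kl * ((m:ℝ)⁻¹) ^ N := by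
          gcongr ?_ + ?_
          · rw [norm_sub_rev]; exact hr m hm
          · exact hl m hm
      _ = (Kr + Kl) * ((m:ℝ)⁻¹) ^ N := by ring
  intro k
  induction k using Nat.strong_induction_on with
  | _ k ih =>
  obtain ⟨K, hK0, hK⟩ := hDD (k + 1)
  have hb : ∀ m : ℕ, 1 ≤ m → ‖T m (E k)‖ ≤ K * (m : ℝ)⁻¹ := by
    intro m hm
    have h1 := hK m hm
    have hsum : ∑ j ∈ range (k + 1), ((m : ℂ)⁻¹) ^ j • T m (E j)
        = ((m : ℂ)⁻¹) ^ k • T m (E k) := by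
      rw [Finset.sum_range_succ, Finset.sum_eq_zero, zero_add]
      intro j hj
      rw [ih j (mem_range.mp hj), map_zero, smul_zero]
    rw [hsum, norm_smul, norm_pow] at h1
    have hms : ‖((m : ℂ))⁻¹‖ = (m : ℝ)⁻¹ := by simp
    rw [hms] at h1
    have hmpos : (0:ℝ) < (m:ℝ)⁻¹ := by
      have : (0:ℝ) < (m:ℝ) := by exact_mod_cast hm
      positivity
    have hip : (0:ℝ) < ((m:ℝ)⁻¹) ^ k := by positivity
    have h2 : ((m:ℝ)⁻¹) ^ k * ‖T m (E k)‖ ≤ ((m:ℝ)⁻¹) ^ k * (K * (m:ℝ)⁻¹) := by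
      calc ((m:ℝ)⁻¹) ^ k * ‖T m (E k)‖ ≤ K * ((m:ℝ)⁻¹) ^ (k + 1) := h1
        _ = ((m:ℝ)⁻¹) ^ k * (K * (m:ℝ)⁻¹) := by rw [pow_succ]; ring
    exact le_of_mul_le_mul_left h2 hip
  have ht0 : Tendsto (fun m : ℕ => K * (m : ℝ)⁻¹) atTop (nhds 0) := by
    simpa using (tendsto_inv_atTop_nhds_zero_nat (𝕜 := ℝ)).const_mul K
  have hle : ‖E k‖ ≤ 0 :=
    le_of_tendsto_of_tendsto (hT (E k)) ht0
      (eventually_atTop.mpr ⟨1, hb⟩)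
  exact norm_le_zero_iff.mp hle

/- STATEMENT 13: Suppose T satisfies the norm-limit property and (C_j) is an asymptotic
expansion for T.  Then for every k ∈ ℕ and all f, g, h:
∑_{l=0}^{k} C_l(f, C_{k−l}(g,h)) = ∑_{l=0}^{k} C_l(C_{k−l}(f,g), h); consequently the
induced ℂ[[ν]]-bilinear product (F ⋆ G)_k = ∑_{i+j+l=k} C_l(F_i, G_j) on
A[[ν]] ≅ (ℕ → A) is associative. -/

/-- The formal star product on `C(X,ℂ)[[ν]] ≅ (ℕ → C(X,ℂ))` induced by the `C_j`. -/
noncomputable def starProd (C : ℕ → C(X, ℂ) →ₗ[ℂ] C(X, ℂ) →ₗ[ℂ] C(X, ℂ))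
    (F G : ℕ → C(X, ℂ)) : ℕ → C(X, ℂ) :=
  fun k => ∑ p ∈ Finset.HasAntidiagonal.antidiagonal k, ∑ q ∈ Finset.HasAntidiagonal.antidiagonal p.2,
    C p.1 (F q.1) (G q.2)

lemma starProd_eq (C : ℕ → C(X, ℂ) →ₗ[ℂ] C(X, ℂ) →ₗ[ℂ] C(X, ℂ))
    (F G : ℕ → C(X, ℂ)) (k : ℕ) :
    starProd C F G k = ∑ c ∈ range (k+1), ∑ i ∈ range (k+1), ∑ j ∈ range (k+1),
      if c + i + j = k then C c (F i) (G j) else 0 := by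
  unfold starProd
  rw [adSum (k+1) k (Nat.lt_succ_self k)
    (fun c n => ∑ q ∈ Finset.HasAntidiagonal.antidiagonal n, C c (F q.1) (G q.2))]
  refine Finset.sum_congr rfl fun c _ => ?_
  have step1 : ∀ n ∈ range (k+1),
      (if c + n = k then ∑ q ∈ Finset.HasAntidiagonal.antidiagonal n, C c (F q.1) (G q.2) else 0)
      = ∑ i ∈ range (k+1), ∑ j ∈ range (k+1),
          if n = i + j ∧ c + i + j = k then C c (F i) (G j) else 0 := by
    intro n hn
    by_cases hP : c + n = k
    · rw [if_pos hP, adSum (k+1) n (mem_range.mp hn) (fun i j => C c (F i) (G j))]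
      refine Finset.sum_congr rfl fun i _ => Finset.sum_congr rfl fun j _ => ?_
      split_ifs with h1 h2 h2 <;> first | rfl | omega
    · rw [if_neg hP, eq_comm]
      refine Finset.sum_eq_zero fun i _ => Finset.sum_eq_zero fun j _ => if_neg ?_
      omega
  rw [Finset.sum_congr rfl step1, Finset.sum_comm]
  refine Finset.sum_congr rfl fun i _ => ?_
  rw [Finset.sum_comm]
  refine Finset.sum_congr rfl fun j _ => ?_
  exact sum_ite_eq_of (k+1) (i+j) (c + i + j = k) (fun hP => by omega) _

lemma star_assoc (C : ℕ → C(X, ℂ) →ₗ[ℂ] C(X, ℂ) →ₗ[ℂ] C(X, ℂ))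
    (key : ∀ (k : ℕ) (f g h : C(X, ℂ)),
      ∑ l ∈ Finset.range (k + 1), C l f (C (k - l) g h)
        = ∑ l ∈ Finset.range (k + 1), C l (C (k - l) f g) h)
    (F G K : ℕ → C(X, ℂ)) :
    starProd C F (starProd C G K) = starProd C (starProd C F G) K := by
  funext k
  set R := range (k+1) with hR
  -- LEFT side normal form
  have hL : starProd C F (starProd C G K) k
      = ∑ i ∈ R, ∑ a ∈ R, ∑ b ∈ R, ∑ c ∈ R, ∑ d ∈ R,
          if c + d + i + a + b = k then C c (F i) (C d (G a) (K b)) else 0 := by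
    rw [starProd_eq]
    have e1 : ∀ c ∈ R, ∀ i ∈ R, ∀ j ∈ R,
        (if c + i + j = k then C c (F i) (starProd C G K j) else 0)
        = ∑ d ∈ R, ∑ a ∈ R, ∑ b ∈ R,
            if j = d + a + b ∧ c + d + i + a + b = k
              then C c (F i) (C d (G a) (K b)) else 0 := by
      intro c _ i _ j _
      by_cases hc : c + i + j = k
      · rw [if_pos hc, starProd_eq C G K j, extend3 j k (by omega)]
        rw [map_sum]
        refine Finset.sum_congr rfl fun d _ => ?_
        rw [map_sum]
        refine Finset.sum_congr rfl fun a _ => ?_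
        rw [map_sum]
        refine Finset.sum_congr rfl fun b _ => ?_
        rw [apply_ite (C c (F i)), map_zero]
        split_ifs with h1 h2 h2 <;> first | rfl | omega
      · rw [if_neg hc, eq_comm]
        refine Finset.sum_eq_zero fun d _ => Finset.sum_eq_zero fun a _ =>
          Finset.sum_eq_zero fun b _ => if_neg ?_
        omega
    calc ∑ c ∈ R, ∑ i ∈ R, ∑ j ∈ R,
          (if c + i + j = k then C c (F i) (starProd C G K j) else 0)
        = ∑ c ∈ R, ∑ i ∈ R, ∑ j ∈ R, ∑ d ∈ R, ∑ a ∈ R, ∑ b ∈ R,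
            if j = d + a + b ∧ c + d + i + a + b = k
              then C c (F i) (C d (G a) (K b)) else 0 :=
          Finset.sum_congr rfl fun c hc => Finset.sum_congr rfl fun i hi =>
            Finset.sum_congr rfl fun j hj => e1 c hc i hi j hj
      _ = ∑ c ∈ R, ∑ i ∈ R, ∑ d ∈ R, ∑ a ∈ R, ∑ b ∈ R, ∑ j ∈ R,
            if j = d + a + b ∧ c + d + i + a + b = k
              then C c (F i) (C d (G a) (K b)) else 0 :=
          Finset.sum_congr rfl fun c _ => Finset.sum_congr rfl fun i _ =>
            rot4 R fun j d a b =>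
              if j = d + a + b ∧ c + d + i + a + b = k
                then C c (F i) (C d (G a) (K b)) else 0
      _ = ∑ c ∈ R, ∑ i ∈ R, ∑ d ∈ R, ∑ a ∈ R, ∑ b ∈ R,
            if c + d + i + a + b = k then C c (F i) (C d (G a) (K b)) else 0 := by
          refine Finset.sum_congr rfl fun c _ => Finset.sum_congr rfl fun i _ =>
            Finset.sum_congr rfl fun d _ => Finset.sum_congr rfl fun a _ =>
            Finset.sum_congr rfl fun b _ => ?_
          exact sum_ite_eq_of (k+1) (d+a+b) (c + d + i + a + b = k) (fun h => by omega) _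
      _ = _ := reorder5_L R fun c i d a b =>
            if c + d + i + a + b = k then C c (F i) (C d (G a) (K b)) else 0
  -- RIGHT side normal form
  have hRm : starProd C (starProd C F G) K k
      = ∑ i ∈ R, ∑ a ∈ R, ∑ b ∈ R, ∑ c ∈ R, ∑ d ∈ R,
          if c + d + i + a + b = k then C c (C d (F i) (G a)) (K b) else 0 := by
    rw [starProd_eq]
    have e1 : ∀ c ∈ R, ∀ j ∈ R, ∀ b ∈ R,
        (if c + j + b = k then C c (starProd C F G j) (K b) else 0)
        = ∑ d ∈ R, ∑ i ∈ R, ∑ a ∈ R,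
            if j = d + i + a ∧ c + d + i + a + b = k
              then C c (C d (F i) (G a)) (K b) else 0 := by
      intro c _ j _ b _
      by_cases hc : c + j + b = k
      · rw [if_pos hc, starProd_eq C F G j, extend3 j k (by omega)]
        rw [map_sum, LinearMap.coe_sum, Finset.sum_apply]
        refine Finset.sum_congr rfl fun d _ => ?_
        rw [map_sum, LinearMap.coe_sum, Finset.sum_apply]
        refine Finset.sum_congr rfl fun i _ => ?_
        rw [map_sum, LinearMap.coe_sum, Finset.sum_apply]
        refine Finset.sum_congr rfl fun a _ => ?_
        rw [apply_ite (C c), map_zero, apply_ite (fun (φ : C(X,ℂ) →ₗ[ℂ] C(X,ℂ)) => φ (K b)),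
          LinearMap.zero_apply]
        split_ifs with h1 h2 h2 <;> first | rfl | omega
      · rw [if_neg hc, eq_comm]
        refine Finset.sum_eq_zero fun d _ => Finset.sum_eq_zero fun i _ =>
          Finset.sum_eq_zero fun a _ => if_neg ?_
        omega
    calc ∑ c ∈ R, ∑ j ∈ R, ∑ b ∈ R,
          (if c + j + b = k then C c (starProd C F G j) (K b) else 0)
        = ∑ c ∈ R, ∑ j ∈ R, ∑ b ∈ R, ∑ d ∈ R, ∑ i ∈ R, ∑ a ∈ R,
            if j = d + i + a ∧ c + d + i + a + b = k
              then C c (C d (F i) (G a)) (K b) else 0 :=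
          Finset.sum_congr rfl fun c hc => Finset.sum_congr rfl fun j hj =>
            Finset.sum_congr rfl fun b hb => e1 c hc j hj b hb
      _ = ∑ c ∈ R, ∑ b ∈ R, ∑ d ∈ R, ∑ i ∈ R, ∑ a ∈ R, ∑ j ∈ R,
            if j = d + i + a ∧ c + d + i + a + b = k
              then C c (C d (F i) (G a)) (K b) else 0 :=
          Finset.sum_congr rfl fun c _ =>
            rot5 R fun j b d i a =>
              if j = d + i + a ∧ c + d + i + a + b = k
                then C c (C d (F i) (G a)) (K b) else 0
      _ = ∑ c ∈ R, ∑ b ∈ R, ∑ d ∈ R, ∑ i ∈ R, ∑ a ∈ R,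
            if c + d + i + a + b = k then C c (C d (F i) (G a)) (K b) else 0 := by
          refine Finset.sum_congr rfl fun c _ => Finset.sum_congr rfl fun b _ =>
            Finset.sum_congr rfl fun d _ => Finset.sum_congr rfl fun i _ =>
            Finset.sum_congr rfl fun a _ => ?_
          exact sum_ite_eq_of (k+1) (d+i+a) (c + d + i + a + b = k) (fun h => by omega) _
      _ = _ := reorder5_R R fun c b d i a =>
            if c + d + i + a + b = k then C c (C d (F i) (G a)) (K b) else 0
  rw [hL, hRm]
  -- final comparison, fixing i a b
  refine Finset.sum_congr rfl fun i hi => Finset.sum_congr rfl fun a ha =>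
    Finset.sum_congr rfl fun b hb => ?_
  by_cases hs : i + a + b ≤ k
  · set n := k - (i + a + b) with hn
    have hcond : ∀ c d : ℕ, (c + d + i + a + b = k) ↔ (c + d = n) := by
      intro c d; omega
    have hnlt : n < k + 1 := by omega
    calc ∑ c ∈ R, ∑ d ∈ R,
          (if c + d + i + a + b = k then C c (F i) (C d (G a) (K b)) else 0)
        = ∑ c ∈ R, ∑ d ∈ R,
          (if c + d = n then C c (F i) (C d (G a) (K b)) else 0) := by
          refine Finset.sum_congr rfl fun c _ => Finset.sum_congr rfl fun d _ => ?_
          rw [if_congr (hcond c d) rfl rfl]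
      _ = ∑ p ∈ Finset.HasAntidiagonal.antidiagonal n, C p.1 (F i) (C p.2 (G a) (K b)) :=
          (adSum (k+1) n hnlt (fun c d => C c (F i) (C d (G a) (K b)))).symm
      _ = ∑ l ∈ range (n+1), C l (F i) (C (n - l) (G a) (K b)) :=
          Finset.Nat.sum_antidiagonal_eq_sum_range_succ_mk _ n
      _ = ∑ l ∈ range (n+1), C l (C (n - l) (F i) (G a)) (K b) := key n (F i) (G a) (K b)
      _ = ∑ p ∈ Finset.HasAntidiagonal.antidiagonal n, C p.1 (C p.2 (F i) (G a)) (K b) :=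
          (Finset.Nat.sum_antidiagonal_eq_sum_range_succ_mk
            (fun p => C p.1 (C p.2 (F i) (G a)) (K b)) n).symm
      _ = ∑ c ∈ R, ∑ d ∈ R,
          (if c + d = n then C c (C d (F i) (G a)) (K b) else 0) :=
          adSum (k+1) n hnlt (fun c d => C c (C d (F i) (G a)) (K b))
      _ = ∑ c ∈ R, ∑ d ∈ R,
          (if c + d + i + a + b = k then C c (C d (F i) (G a)) (K b) else 0) := by
          refine Finset.sum_congr rfl fun c _ => Finset.sum_congr rfl fun d _ => ?_
          rw [if_congr (hcond c d) rfl rfl]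
  · refine (Finset.sum_eq_zero fun c _ => Finset.sum_eq_zero fun d _ => if_neg (by omega)).trans
      (Finset.sum_eq_zero fun c _ => Finset.sum_eq_zero fun d _ => if_neg (by omega)).symm

theorem starProduct_associative
    (T : ∀ m : ℕ, C(X, ℂ) →ₗ[ℂ] (H m →L[ℂ] H m))
    (hT : NormLimitProperty T)
    (C : ℕ → C(X, ℂ) →ₗ[ℂ] C(X, ℂ) →ₗ[ℂ] C(X, ℂ))
    (hC : IsAsymptoticExpansion T C) :
    (∀ (k : ℕ) (f g h : C(X, ℂ)),
      ∑ l ∈ Finset.range (k + 1), C l f (C (k - l) g h)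
        = ∑ l ∈ Finset.range (k + 1), C l (C (k - l) f g) h) ∧
    (∀ F G K : ℕ → C(X, ℂ),
      starProd C F (starProd C G K) = starProd C (starProd C F G) K) := by
  exact ⟨key_assoc T hT C hC, star_assoc C (key_assoc T hT C hC)⟩
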